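/- For every automatic function f (mapping strings over a finite alphabet to strings over a possibly different finite alphabet) there is a deterministic position-faithful one-tape Turing machine which computes f in linear time; indeed, there is a constant c such that the machine halts on each input x in the domain of f within 2·(|x|+c+2) steps. -/

import Mathlib

open Classical

/-- A set of strings is regular iff it is accepted by a deterministic finite automaton. -/
def IsRegularLang {γ : Type} (P : Set (List γ)) : Prop :=
  ∃ (Q : Type) (_ : Fintype Q) (M : DFA γ Q), ∀ w, w ∈ M.accepts ↔ w ∈ P

/-- The convolution of two strings, padding the shorter one with `none` (the symbol □). -/
def convP {α β : Type} (x : List α) (y : List β) : List (Option α × Option β) :=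
  (List.range (max x.length y.length)).map fun i => (x[i]?, y[i]?)

/-- Convolution padded with `(none, none)` up to a prescribed length `L`
(this is the convolution of `x·□^*` and `y·□^*`, both padded to length `L`). -/
def convPad {α β : Type} (x : List α) (y : List β) (L : ℕ) : List (Option α × Option β) :=
  (List.range L).map fun i => (x[i]?, y[i]?)

/-- The convolution of three strings. -/
def conv3 {α β γ : Type} (x : List α) (y : List β) (z : List γ) :
    List (Option α × Option β × Option γ) :=
  (List.range (max x.length (max y.length z.length))).map fun i =>
    (x[i]?, y[i]?, z[i]?)

/-- The convolution of four strings. -/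
def conv4 {α β γ δ : Type} (a : List α) (b : List β) (c : List γ) (d : List δ) :
    List (Option α × Option β × Option γ × Option δ) :=
  (List.range (max (max a.length b.length) (max c.length d.length))).map fun i =>
    (a[i]?, b[i]?, getElem? c i, d[i]?)

/-- A partial function on strings is automatic iff its graph of convolutions is regular. -/
def IsAutomatic {α β : Type} (f : List α → Option (List β)) : Prop :=
  IsRegularLang { w | ∃ x y, f x = some y ∧ w = convP x y }

/-- Tape symbols: the left-end marker ⊞, the blank □, or an alphabet symbol. -/
inductive TSym (Γ : Type) : Type
  | lend : TSym Γ
  | blank : TSym Γ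
  | sym : Γ → TSym Γ

/-- Head movement: `true` = one cell to the right, `false` = one cell to the left
(capped at cell 0). -/
def tmove (b : Bool) (h : ℕ) : ℕ := if b then h + 1 else h - 1

/-- The tape holding ⊞ w □ □ ⋯ -/
def listTape {Γ : Type} (w : List Γ) : ℕ → TSym Γ
  | 0 => TSym.lend
  | n + 1 =>
    match w[n]? with
    | some a => TSym.sym a
    | none => TSym.blank

/-- The tape `t` starts with ⊞ w □ (the content beyond the first blank is unconstrained). -/
def TapeStartsWith {Γ : Type} (t : ℕ → TSym Γ) (w : List Γ) : Prop :=
  t 0 = TSym.lend ∧ (∀ i : Fin w.length, t (i.1 + 1) = TSym.sym (w.get i)) ∧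
    t (w.length + 1) = TSym.blank

/-- A configuration of a one-tape Turing machine. -/
structure TMConfig (Q Γ : Type) where
  state : Q
  head : ℕ
  tape : ℕ → TSym Γ

/-- A deterministic position-faithful one-tape Turing machine with input alphabet `α`,
output alphabet `β` and (finite) working alphabet `Γ` into which both embed.  The
left-end marker ⊞ occurs exactly at cell 0: it can never be modified (the head moves
right on reading it) and it is never written elsewhere. -/
structure DPFTM (α β Γ : Type) where
  Q : Type
  finQ : Fintype Q
  finΓ : Fintype Γ
  inputEmb : α → Γ
  outputEmb : β → Γ
  inputInj : Function.Injective inputEmb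
  outputInj : Function.Injective outputEmb
  init : Q
  accept : Q
  reject : Q
  δ : Q → TSym Γ → Q × TSym Γ × Bool
  faithful_end : ∀ q, (δ q TSym.lend).2.1 = TSym.lend ∧ (δ q TSym.lend).2.2 = true
  faithful_noend : ∀ q a, a ≠ TSym.lend → (δ q a).2.1 ≠ TSym.lend

namespace DPFTM

def step {α β Γ : Type} (M : DPFTM α β Γ) (c : TMConfig M.Q Γ) : TMConfig M.Q Γ :=
  ⟨(M.δ c.state (c.tape c.head)).1,
   tmove (M.δ c.state (c.tape c.head)).2.2 c.head,
   Function.update c.tape c.head (M.δ c.state (c.tape c.head)).2.1⟩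

/-- The initial configuration on input `x`: tape ⊞ x □ □ ⋯, head on ⊞. -/
def initConfig {α β Γ : Type} (M : DPFTM α β Γ) (x : List α) : TMConfig M.Q Γ :=
  ⟨M.init, 0, listTape (x.map M.inputEmb)⟩

/-- The configuration after `n` steps on input `x`. -/
def conf {α β Γ : Type} (M : DPFTM α β Γ) (x : List α) (n : ℕ) : TMConfig M.Q Γ :=
  M.step^[n] (M.initConfig x)

/-- The machine has halted (in the accepting or in the rejecting state). -/
def Halted {α β Γ : Type} (M : DPFTM α β Γ) (c : TMConfig M.Q Γ) : Prop :=
  c.state = M.accept ∨ c.state = M.reject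

/-- On input `x` the machine halts, accepting, after exactly `n` steps. -/
def HaltsAcceptAt {α β Γ : Type} (M : DPFTM α β Γ) (x : List α) (n : ℕ) : Prop :=
  (M.conf x n).state = M.accept ∧ ∀ m < n, ¬ M.Halted (M.conf x m)

/-- `M` computes the partial function `f`: for every `x`, `f x = some y` iff `M`,
started on ⊞ x □ □ ⋯, eventually halts in the accepting state with tape content
starting with ⊞ y □. -/
def Computes {α β Γ : Type} (M : DPFTM α β Γ) (f : List α → Option (List β)) : Prop :=
  ∀ x y, f x = some y ↔
    ∃ n, M.HaltsAcceptAt x n ∧ TapeStartsWith (M.conf x n).tape (y.map M.outputEmb)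

/-- There is a constant `c` such that on every input `x` the computation lasts at most
`c·(|x|+1)` steps. -/
def LinearTime {α β Γ : Type} (M : DPFTM α β Γ) : Prop :=
  ∃ c : ℕ, ∀ x : List α, ∃ n ≤ c * (x.length + 1), M.Halted (M.conf x n)

end DPFTM

/-- A non-deterministic position-faithful one-tape Turing machine. -/
structure NPFTM (α β Γ : Type) where
  Q : Type
  finQ : Fintype Q
  finΓ : Fintype Γ
  inputEmb : α → Γ
  outputEmb : β → Γ
  inputInj : Function.Injective inputEmb
  outputInj : Function.Injective outputEmb
  init : Q
  accept : Q
  reject : Q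
  δ : Q → TSym Γ → Set (Q × TSym Γ × Bool)
  faithful_end : ∀ q t, t ∈ δ q TSym.lend → t.2.1 = TSym.lend ∧ t.2.2 = true
  faithful_noend : ∀ q a t, a ≠ TSym.lend → t ∈ δ q a → t.2.1 ≠ TSym.lend

namespace NPFTM

/-- The one-step relation between configurations. -/
def StepRel {α β Γ : Type} (M : NPFTM α β Γ) (c c' : TMConfig M.Q Γ) : Prop :=
  ∃ t ∈ M.δ c.state (c.tape c.head),
    c' = ⟨t.1, tmove t.2.2 c.head, Function.update c.tape c.head t.2.1⟩

def initConfig {α β Γ : Type} (M : NPFTM α β Γ) (x : List α) : TMConfig M.Q Γ :=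
  ⟨M.init, 0, listTape (x.map M.inputEmb)⟩

def Halted {α β Γ : Type} (M : NPFTM α β Γ) (c : TMConfig M.Q Γ) : Prop :=
  c.state = M.accept ∨ c.state = M.reject

/-- `p` is a computation (run) of length `n` of `M` on input `x`: it starts in the
initial configuration, performs `n` steps, and does not halt before step `n`. -/
def IsRun {α β Γ : Type} (M : NPFTM α β Γ) (x : List α) (p : ℕ → TMConfig M.Q Γ)
    (n : ℕ) : Prop :=
  p 0 = M.initConfig x ∧ ∀ i < n, ¬ M.Halted (p i) ∧ M.StepRel (p i) (p (i + 1))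

/-- `M` computes the partial function `f`: `f x = some y` iff some computation of `M`
on `x` halts accepting with tape content starting ⊞ y □.  (In particular any two
accepting computations on the same input produce the same output.) -/
def Computes {α β Γ : Type} (M : NPFTM α β Γ) (f : List α → Option (List β)) : Prop :=
  ∀ x y, f x = some y ↔
    ∃ (p : ℕ → TMConfig M.Q Γ) (n : ℕ), M.IsRun x p n ∧ (p n).state = M.accept ∧
      TapeStartsWith (p n).tape (y.map M.outputEmb)

/-- Every computation (accepting or not) on input `x` lasts at most `c·(|x|+1)` steps. -/
def LinearTime {α β Γ : Type} (M : NPFTM α β Γ) : Prop :=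
  ∃ c : ℕ, ∀ (x : List α) (p : ℕ → TMConfig M.Q Γ) (n : ℕ),
    M.IsRun x p n → n ≤ c * (x.length + 1)

end NPFTM

/-- The length of the longest datum among `T 0, …, T n`. -/
def maxLen {σ : Type} (T : ℕ → List σ) (n : ℕ) : ℕ :=
  (Finset.range (n + 1)).sup fun i => (T i).length

/-- `T` is a text for the language `Lang`: it enumerates exactly the elements of `Lang`. -/
def IsTextFor {σ : Type} (T : ℕ → List σ) (Lang : Set (List σ)) : Prop :=
  Set.range T = Lang

/-- An automatic family of (nonempty) languages over the alphabet `σ`, indexed by a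
regular set of strings over the alphabet `ι`. -/
structure AutoFam (ι σ : Type) [Fintype ι] [Fintype σ] where
  Idx : Set (List ι)
  L : List ι → Set (List σ)
  regIdx : IsRegularLang Idx
  regFam : IsRegularLang { w | ∃ e x, e ∈ Idx ∧ x ∈ L e ∧ w = convP e x }
  nonemptyL : ∀ e ∈ Idx, (L e).Nonempty

/-- An abstract learner: it maps (old memory, new datum) to (new memory, conjecture),
starting from a fixed initial memory. -/
structure PLearner (σ μ ι : Type) where
  minit : List μ
  lstep : List μ → List σ → List μ × List ι

namespace PLearner

/-- The memory of the learner after having processed `T 0, …, T (n-1)`. -/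
def mem {σ μ ι : Type} (M : PLearner σ μ ι) (T : ℕ → List σ) : ℕ → List μ
  | 0 => M.minit
  | n + 1 => (M.lstep (PLearner.mem M T n) (T n)).1

/-- The conjecture of the learner after having processed `T 0, …, T n`. -/
def hyp {σ μ ι : Type} (M : PLearner σ μ ι) (T : ℕ → List σ) (n : ℕ) : List ι :=
  (M.lstep (M.mem T n) (T n)).2

/-- The learner is automatic: the graph of its update function, as a set of
convolutions, is regular. -/
def Automatic {σ μ ι : Type} [Fintype σ] [Fintype μ] [Fintype ι]
    (M : PLearner σ μ ι) : Prop :=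
  IsRegularLang { w | ∃ om dat, w = conv4 om dat (M.lstep om dat).1 (M.lstep om dat).2 }

/-- The memory of the learner is bounded in length by the length of the longest datum
seen so far plus a constant. -/
def MemBounded {σ μ ι : Type} (M : PLearner σ μ ι) : Prop :=
  ∃ c : ℕ, ∀ (T : ℕ → List σ) (n : ℕ), (M.mem T (n + 1)).length ≤ maxLen T n + c

/-- The learner learns the family `(Idx, L)`: on every text for some `L e₀` with
`e₀ ∈ Idx`, its conjectures converge to a fixed index `e ∈ Idx` with `L e = L e₀`. -/
def Learns {σ μ ι : Type} (M : PLearner σ μ ι)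
    (Idx : Set (List ι)) (L : List ι → Set (List σ)) : Prop :=
  ∀ e₀ ∈ Idx, ∀ T : ℕ → List σ, IsTextFor T (L e₀) →
    ∃ e ∈ Idx, L e = L e₀ ∧ ∃ N, ∀ n ≥ N, M.hyp T n = e

end PLearner

/-- An unrestricted learner whose long-term memory is an arbitrary natural number. -/
structure RecLearner (σ ι : Type) where
  minit : ℕ
  lstep : ℕ × List σ → ℕ × List ι

namespace RecLearner

def mem {σ ι : Type} (M : RecLearner σ ι) (T : ℕ → List σ) : ℕ → ℕ
  | 0 => M.minit
  | n + 1 => (M.lstep (RecLearner.mem M T n, T n)).1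

def hyp {σ ι : Type} (M : RecLearner σ ι) (T : ℕ → List σ) (n : ℕ) : List ι :=
  (M.lstep (M.mem T n, T n)).2

/-- The learner is recursive: its update function is computable. -/
def Recursive {σ ι : Type} [Primcodable σ] [Primcodable ι] (M : RecLearner σ ι) : Prop :=
  Computable M.lstep

def Learns {σ ι : Type} (M : RecLearner σ ι)
    (Idx : Set (List ι)) (L : List ι → Set (List σ)) : Prop :=
  ∀ e₀ ∈ Idx, ∀ T : ℕ → List σ, IsTextFor T (L e₀) →
    ∃ e ∈ Idx, L e = L e₀ ∧ ∃ N, ∀ n ≥ N, M.hyp T n = e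

end RecLearner


section GetQ
def List.get? {γ : Type} (l : List γ) (i : ℕ) : Option γ := l[i]?

@[simp] theorem List.get?_eq_getElem? {γ : Type} (l : List γ) (i : ℕ) : l.get? i = l[i]? := rfl

theorem List.get?_eq_none {γ : Type} {l : List γ} {n : ℕ} : l.get? n = none ↔ l.length ≤ n := by
  simp [List.get?]
end GetQ


set_option linter.unusedSectionVars false

section AuxConv
theorem convPad_succ {α β : Type} (x : List α) (y : List β) (i : ℕ) :
    convPad x y (i+1) = convPad x y i ++ [(x.get? i, y.get? i)] := by
  simp [convPad, List.range_succ]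

theorem convP_eq_convPad {α β : Type} (x : List α) (y : List β) :
    convP x y = convPad x y (max x.length y.length) := rfl

theorem convPad_congr {α β : Type} (x : List α) {y y' : List β} (i : ℕ)
    (h : ∀ k < i, y.get? k = y'.get? k) : convPad x y i = convPad x y' i := by
  unfold convPad
  apply List.map_congr_left
  intro k hk
  rw [List.mem_range] at hk
  rw [show y[k]? = y'[k]? from h k hk]

theorem get?_eq_of_convP_eq {α β : Type} {x x' : List α} {y y' : List β}
    (h : convP x y = convP x' y') :
    (∀ i, x.get? i = x'.get? i) ∧ (∀ i, y.get? i = y'.get? i) := by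
  have hlen : max x.length y.length = max x'.length y'.length := by
    have := congrArg List.length h
    simpa [convP] using this
  have hsym : ∀ i < max x.length y.length, (x.get? i, y.get? i) = (x'.get? i, y'.get? i) := by
    intro i hi
    have h1 : (convP x y).get? i = some (x.get? i, y.get? i) := by
      simp [convP, List.get?_eq_getElem?, List.getElem?_map, List.getElem?_range, hi]
    have hi' : i < max x'.length y'.length := hlen ▸ hi
    have h2 : (convP x' y').get? i = some (x'.get? i, y'.get? i) := by
      simp [convP, List.get?_eq_getElem?, List.getElem?_map, List.getElem?_range, hi']
    rw [h, h2] at h1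
    exact (Option.some.inj h1).symm
  constructor
  · intro i
    by_cases hi : i < max x.length y.length
    · exact (Prod.mk.injEq _ _ _ _ ▸ hsym i hi).1
    · push_neg at hi
      have hx : x.get? i = none := List.get?_eq_none.2 (le_trans (le_max_left _ _) hi)
      have hx' : x'.get? i = none := List.get?_eq_none.2 (le_trans (le_max_left _ _) (hlen ▸ hi))
      rw [hx, hx']
  · intro i
    by_cases hi : i < max x.length y.length
    · exact (Prod.mk.injEq _ _ _ _ ▸ hsym i hi).2
    · push_neg at hi
      have hx : y.get? i = none := List.get?_eq_none.2 (le_trans (le_max_right _ _) hi)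
      have hx' : y'.get? i = none := List.get?_eq_none.2 (le_trans (le_max_right _ _) (hlen ▸ hi))
      rw [hx, hx']

theorem convP_inj {α β : Type} {x x' : List α} {y y' : List β}
    (h : convP x y = convP x' y') : x = x' ∧ y = y' := by
  obtain ⟨h1, h2⟩ := get?_eq_of_convP_eq h
  exact ⟨List.ext_getElem? h1, List.ext_getElem? h2⟩

end AuxConv

section RS
attribute [local instance] Classical.propDecidable
variable {α β : Type} {S : Type} [Fintype S] (D : DFA (Option α × Option β) S)

/-- status of `y` of length ℓ at position i -/
def stat (ℓ i : ℕ) : Fin 3 := if i < ℓ then 0 else if i = ℓ then 1 else 2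

theorem stat_of_lt {ℓ i : ℕ} (h : i < ℓ) : stat ℓ i = 0 := by simp [stat, h]
theorem stat_of_eq {ℓ i : ℕ} (h : i = ℓ) : stat ℓ i = 1 := by simp [stat, h]
theorem stat_of_gt {ℓ i : ℕ} (h : ℓ < i) : stat ℓ i = 2 := by
  simp [stat, Nat.lt_asymm h, Nat.ne_of_gt h]

theorem stat_eq_zero {ℓ i : ℕ} (h : stat ℓ i = 0) : i < ℓ := by
  rcases lt_trichotomy i ℓ with hl | hl | hl
  · exact hl
  · rw [stat_of_eq hl] at h; exact absurd h (by decide)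
  · rw [stat_of_gt hl] at h; exact absurd h (by decide)

theorem stat_ne_zero {ℓ i : ℕ} (h : stat ℓ i ≠ 0) : ℓ ≤ i := by
  by_contra hc; push_neg at hc; exact h (stat_of_lt hc)
theorem stat_eq_one {ℓ i : ℕ} (h : stat ℓ i = 1) : ℓ = i := by
  rcases lt_trichotomy i ℓ with hl | hl | hl
  · rw [stat_of_lt hl] at h; exact absurd h (by decide)
  · exact hl.symm
  · rw [stat_of_gt hl] at h; exact absurd h (by decide)
theorem stat_eq_two {ℓ i : ℕ} (h : stat ℓ i = 2) : ℓ < i := by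
  rcases lt_trichotomy i ℓ with hl | hl | hl
  · rw [stat_of_lt hl] at h; exact absurd h (by decide)
  · rw [stat_of_eq hl] at h; exact absurd h (by decide)
  · exact hl

def StatTrans (m : Fin 3) (c : Option β) (m' : Fin 3) : Prop :=
  (m = 0 ∧ c ≠ none ∧ (m' = 0 ∨ m' = 1)) ∨ (m ≠ 0 ∧ c = none ∧ m' = 2)

def TTrans (a : Option α) (p : S × Fin 3) (c : Option β) (q : S × Fin 3) : Prop :=
  q.1 = D.step p.1 (a, c) ∧ StatTrans p.2 c q.2

def stPair (x : List α) (z : List β) (i : ℕ) : S × Fin 3 :=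
  (D.eval (convPad x z i), stat z.length i)

noncomputable def ReachSet (x : List α) (i : ℕ) : Finset (S × Fin 3) :=
  Finset.univ.filter fun q => ∃ z : List β, q = stPair D x z i

theorem mem_ReachSet {x : List α} {i : ℕ} {q : S × Fin 3} :
    q ∈ ReachSet D x i ↔ ∃ z : List β, q = stPair D x z i := by
  simp [ReachSet]

noncomputable def Fstep (a : Option α) (R : Finset (S × Fin 3)) : Finset (S × Fin 3) :=
  Finset.univ.filter fun q => ∃ p ∈ R, ∃ c, TTrans D a p c q

theorem mem_Fstep {a : Option α} {R : Finset (S × Fin 3)} {q : S × Fin 3} :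
    q ∈ Fstep D a R ↔ ∃ p ∈ R, ∃ c, TTrans D a p c q := by
  simp [Fstep]

theorem stPair_zero (x : List α) (z : List β) :
    stPair D x z 0 = (D.start, stat z.length 0) := by
  simp [stPair, convPad, DFA.eval]

/-- the key one-step relation between `stPair`s -/
theorem trans_stPair (x : List α) (z : List β) (j : ℕ) :
    TTrans D (x.get? j) (stPair D x z j) (z.get? j) (stPair D x z (j+1)) := by
  constructor
  · show D.eval (convPad x z (j+1)) = _
    rw [convPad_succ, DFA.eval_append_singleton]
    rfl
  · show StatTrans (stat z.length j) (z.get? j) (stat z.length (j+1))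
    rcases lt_trichotomy j z.length with hl | hl | hl
    · left
      refine ⟨stat_of_lt hl, by simp [List.get?_eq_getElem?, List.getElem?_eq_some_iff, hl], ?_⟩
      rcases eq_or_lt_of_le (Nat.succ_le_of_lt hl) with h | h
      · right; exact stat_of_eq h
      · left; exact stat_of_lt h
    · right
      refine ⟨by rw [stat_of_eq hl]; decide, ?_, stat_of_gt (by omega)⟩
      simp [List.get?_eq_getElem?, hl.ge]
    · right
      refine ⟨by rw [stat_of_gt hl]; decide, ?_, stat_of_gt (by omega)⟩
      simp [List.get?_eq_getElem?, hl.le]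

/-- splicing lemma: build a new `z` from a prefix witness, a chosen symbol, and a suffix -/
theorem splice (z'' z : List β) {j : ℕ} {c : Option β}
    (hst : StatTrans (stat z''.length j) c (stat z.length (j+1))) :
    ∃ z' : List β,
      (∀ k < j, z'.get? k = z''.get? k) ∧ z'.get? j = c ∧
      (∀ k, j < k → z'.get? k = z.get? k) ∧
      stat z'.length j = stat z''.length j ∧
      (∀ k, j < k → stat z'.length k = stat z.length k) := by
  rcases hst with ⟨h0, hc, hm⟩ | ⟨h0, hc, hm⟩
  · -- c = some b
    obtain ⟨b, rfl⟩ := Option.ne_none_iff_exists'.mp hc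
    have hj'' : j < z''.length := by
      by_contra hle
      push_neg at hle
      rcases eq_or_lt_of_le hle with h | h
      · rw [stat_of_eq h.symm] at h0; exact absurd h0 (by decide)
      · rw [stat_of_gt h] at h0; exact absurd h0 (by decide)
    have hjz : j + 1 ≤ z.length := by
      rcases hm with h | h
      · exact (stat_eq_zero h).le
      · exact (stat_eq_one h).ge
    refine ⟨z''.take j ++ b :: z.drop (j+1), ?_, ?_, ?_, ?_, ?_⟩
    all_goals try intro k hk
    · rw [List.get?_eq_getElem?, List.get?_eq_getElem?, List.getElem?_append_left
        (by simp [hj''.le, hk]), List.getElem?_take]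
      simp [hk]
    · rw [List.get?_eq_getElem?, List.getElem?_append_right (by simp [hj''.le]),
        List.length_take, Nat.min_eq_left hj''.le]
      simp
    · rw [List.get?_eq_getElem?, List.getElem?_append_right
        (by simp [hj''.le]; omega), List.length_take, Nat.min_eq_left hj''.le]
      have : k - j = (k - (j+1)) + 1 := by omega
      rw [this]
      simp [List.getElem?_drop, List.get?_eq_getElem?]
      congr 1
      omega
    · have hlen : (z''.take j ++ b :: z.drop (j+1)).length = z.length := by
        simp [Nat.min_eq_left hj''.le]; omega
      rw [hlen, stat_of_lt (by omega), stat_of_lt hj'']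
    · have hlen : (z''.take j ++ b :: z.drop (j+1)).length = z.length := by
        simp [Nat.min_eq_left hj''.le]; omega
      rw [hlen]
  · -- c = none
    subst hc
    have hz'' : z''.length ≤ j := stat_ne_zero h0
    have hz : z.length ≤ j := by have := stat_eq_two hm; omega
    refine ⟨z'', fun k _ => rfl, ?_, fun k hk => ?_, rfl, fun k hk => ?_⟩
    · exact List.get?_eq_none.2 hz''
    · rw [List.get?_eq_none.2 (by omega), List.get?_eq_none.2 (by omega)]
    · rw [stat_of_gt (by omega), stat_of_gt (by omega)]

theorem exists_len_of_statTrans {m : Fin 3} {c : Option β} {m' : Fin 3} (j : ℕ)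
    (h : StatTrans m c m') : ∃ z₀ : List β, stat z₀.length (j+1) = m' := by
  rcases h with ⟨_, hc, hm⟩ | ⟨_, _, hm⟩
  · obtain ⟨b, rfl⟩ := Option.ne_none_iff_exists'.mp hc
    rcases hm with h | h
    · exact ⟨List.replicate (j+2) b, by rw [h, List.length_replicate, stat_of_lt (by omega)]⟩
    · exact ⟨List.replicate (j+1) b, by rw [h, List.length_replicate, stat_of_eq rfl]⟩
  · exact ⟨[], by rw [hm, List.length_nil, stat_of_gt (by omega)]⟩

theorem eval_convPad_congr (x : List α) {z z' : List β} (j : ℕ)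
    (h : ∀ k < j, z.get? k = z'.get? k) :
    D.eval (convPad x z j) = D.eval (convPad x z' j) := by
  rw [convPad_congr x j h]

theorem Fstep_ReachSet (x : List α) (j : ℕ) :
    Fstep D (x.get? j) (ReachSet D x j) = ReachSet D x (j+1) := by
  ext q
  rw [mem_Fstep, mem_ReachSet]
  constructor
  · rintro ⟨p, hp, c, hq1, hst⟩
    rw [mem_ReachSet] at hp
    obtain ⟨z'', rfl⟩ := hp
    obtain ⟨z₀, hz₀⟩ := exists_len_of_statTrans (β := β) j hst
    obtain ⟨z', h1, h2, _h3, h4, h5⟩ := splice z'' z₀ (by rwa [hz₀])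
    refine ⟨z', ?_⟩
    have heval : D.eval (convPad x z' j) = D.eval (convPad x z'' j) :=
      eval_convPad_congr D x j h1
    ext1
    · rw [hq1]
      show _ = D.eval (convPad x z' (j+1))
      rw [convPad_succ, DFA.eval_append_singleton, heval, h2]
      rfl
    · show q.2 = stat z'.length (j+1)
      rw [h5 (j+1) (by omega), hz₀]
  · rintro ⟨z, rfl⟩
    exact ⟨stPair D x z j, (mem_ReachSet D).2 ⟨z, rfl⟩, z.get? j, trans_stPair D x z j⟩

theorem iterate_exists_small {γ : Type} [Fintype γ] (F : γ → γ) (u : γ) (P : γ → Prop)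
    (h : ∃ t, P (F^[t] u)) : ∃ t < Fintype.card γ, P (F^[t] u) := by
  classical
  set T := Nat.find h with hT
  have hPT : P (F^[T] u) := Nat.find_spec h
  by_cases hlt : T < Fintype.card γ
  · exact ⟨T, hlt, hPT⟩
  · exfalso
    push_neg at hlt
    have : ¬ Function.Injective (fun i : Fin (Fintype.card γ + 1) => F^[i.1] u) := by
      intro hinj
      have := Fintype.card_le_of_injective _ hinj
      simp at this
    rw [Function.not_injective_iff] at this
    obtain ⟨i0, j0, hij0, hne⟩ := this
    have hvne : i0.1 ≠ j0.1 := fun hh => hne (Fin.ext hh)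
    obtain ⟨i, j, hij, hlt2⟩ : ∃ a b : Fin (Fintype.card γ + 1),
        F^[a.1] u = F^[b.1] u ∧ a.1 < b.1 := by
      rcases lt_or_gt_of_ne hvne with h' | h'
      exacts [⟨i0, j0, hij0, h'⟩, ⟨j0, i0, hij0.symm, h'⟩]
    have hjT : j.1 ≤ T := le_trans (Nat.le_of_lt_succ j.2) hlt
    have h1 : T = (T - j.1) + j.1 := by omega
    have heq : F^[T] u = F^[(T - j.1) + i.1] u := by
      conv_lhs => rw [h1]
      rw [Function.iterate_add_apply, ← hij, ← Function.iterate_add_apply]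
    have hlt3 : (T - j.1) + i.1 < T := by omega
    exact Nat.find_min h hlt3 (heq ▸ hPT)

-- ## The machine

variable [Fintype α] [Fintype β]

abbrev Γm (α β S : Type) : Type := α ⊕ β ⊕ (Option α × Finset (S × Fin 3))

noncomputable def Nn (S : Type) [Fintype S] : ℕ := Fintype.card (Finset (S × Fin 3))

abbrev Qm (S : Type) [Fintype S] : Type :=
  (Finset (S × Fin 3) × Bool × Fin (Nn S + 2)) ⊕ ((S × Fin 3) ⊕ Bool)

noncomputable def qFwd (R : Finset (S × Fin 3)) (past : Bool) (cnt : Fin (Nn S + 2)) :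
    Qm S := Sum.inl (R, past, cnt)
def qBwd (p : S × Fin 3) : Qm S := Sum.inr (Sum.inl p)
def qAcc : Qm S := Sum.inr (Sum.inr true)
def qRej : Qm S := Sum.inr (Sum.inr false)

def pairSym (a : Option α) (R : Finset (S × Fin 3)) : TSym (Γm α β S) :=
  TSym.sym (Sum.inr (Sum.inr (a, R)))

def outTSym : Option β → TSym (Γm α β S)
  | some b => TSym.sym (Sum.inr (Sum.inl b))
  | none => TSym.blank

/-- the acceptance check applied to a reach-set -/
def Chk (past : Bool) (R : Finset (S × Fin 3)) : Prop :=
  ∃ q ∈ R, q.1 ∈ D.accept ∧ (if past then q.2 = 1 else q.2 ≠ 0)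

noncomputable def R0 : Finset (S × Fin 3) :=
  Finset.univ.filter fun q => ∃ z : List β, q = ((D.start, stat z.length 0) : S × Fin 3)

theorem R0_eq (x : List α) : R0 (β := β) D = ReachSet D x 0 := by
  unfold R0 ReachSet
  apply Finset.filter_congr
  intro q _
  simp only [stPair_zero, eq_iff_iff]

noncomputable def machδ : Qm S → TSym (Γm α β S) → Qm S × TSym (Γm α β S) × Bool
  | Sum.inl (R, past, cnt), TSym.lend => (Sum.inl (R, past, cnt), TSym.lend, true)
  | Sum.inl (R, past, cnt), TSym.sym (Sum.inl a) =>
      if past then (qRej, TSym.sym (Sum.inl a), true)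
      else (qFwd (Fstep D (some a) R) false cnt, pairSym (some a) R, true)
  | Sum.inl (_, _, _), TSym.sym (Sum.inr s) => (qRej, TSym.sym (Sum.inr s), true)
  | Sum.inl (R, past, cnt), TSym.blank =>
      if h : Chk D past R then (qBwd (Classical.choose h), TSym.blank, false)
      else if h' : cnt.1 < Nn S + 1 then
        (qFwd (Fstep D none R) true ⟨cnt.1 + 1, by omega⟩, pairSym none R, true)
      else (qRej, TSym.blank, true)
  | Sum.inr (Sum.inl p), TSym.lend =>
      if p.1 = D.start ∧ p.2 ≠ 2 then (qAcc, TSym.lend, true) else (qRej, TSym.lend, true)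
  | Sum.inr (Sum.inl p), TSym.sym (Sum.inr (Sum.inr (a, R))) =>
      if h : ∃ pc : (S × Fin 3) × Option β, pc.1 ∈ R ∧ TTrans D a pc.1 pc.2 p then
        (qBwd (Classical.choose h).1, outTSym (Classical.choose h).2, false)
      else (qRej, TSym.sym (Sum.inr (Sum.inr (a, R))), true)
  | Sum.inr (Sum.inl p), TSym.blank => (qRej, TSym.blank, true)
  | Sum.inr (Sum.inl p), TSym.sym s => (qRej, TSym.sym s, true)
  | Sum.inr (Sum.inr b), t => (Sum.inr (Sum.inr b), t, true)

noncomputable def mach : DPFTM α β (Γm α β S) where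
  Q := Qm S
  finQ := inferInstance
  finΓ := inferInstance
  inputEmb := Sum.inl
  outputEmb := fun b => Sum.inr (Sum.inl b)
  inputInj := Sum.inl_injective
  outputInj := fun a b h => Sum.inl_injective (Sum.inr_injective h)
  init := qFwd (R0 (β := β) D) false 0
  accept := qAcc
  reject := qRej
  δ := machδ D
  faithful_end := by
    intro q
    rcases q with ⟨R, past, cnt⟩ | p | b
    · simp [machδ]
    · simp only [machδ]
      split <;> simp
    · simp [machδ]
  faithful_noend := by
    intro q a ha
    rcases q with ⟨R, past, cnt⟩ | p | b
    · rcases a with _ | _ | (a | s)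
      · exact absurd rfl ha
      · simp only [machδ]
        split
        · simp [qBwd, qFwd, pairSym]
        · split <;> simp [qRej, qFwd, pairSym]
      · simp only [machδ]
        split <;> simp [qRej, qFwd, pairSym]
      · simp only [machδ]
        simp [qRej]
    · rcases a with _ | _ | (a | b' | ⟨a2, R2⟩)
      · exact absurd rfl ha
      · simp [machδ, qRej]
      · simp [machδ, qRej]
      · simp [machδ, qRej]
      · simp only [machδ]
        split
        · rcases hc : (Classical.choose _ : (S × Fin 3) × Option β) with ⟨p', c⟩
          rcases c with _ | b2 <;> simp [outTSym]
        · simp [qRej]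
    · rcases a with _ | _ | s
      · exact absurd rfl ha
      · simp [machδ]
      · simp [machδ]

-- ## Simulation: forward pass

theorem mach_step (c : TMConfig (mach D (α := α) (β := β)).Q (Γm α β S)) :
    (mach D).step c = ⟨(machδ D c.state (c.tape c.head)).1,
      tmove (machδ D c.state (c.tape c.head)).2.2 c.head,
      Function.update c.tape c.head (machδ D c.state (c.tape c.head)).2.1⟩ := rfl

theorem listTape_succ {Γ' : Type} (w : List Γ') (i : ℕ) :
    listTape w (i+1) = (match w.get? i with
      | some a => TSym.sym a | none => TSym.blank) := rfl

theorem listTape_map_inl (x : List α) (i : ℕ) :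
    listTape (x.map (Sum.inl : α → Γm α β S)) (i+1) =
      (match x.get? i with
        | some a => TSym.sym (Sum.inl a) | none => TSym.blank) := by
  rw [listTape_succ]
  rcases h : x.get? i with _ | a <;> rw [List.get?_eq_getElem?] at h <;>
    simp [List.get?_eq_getElem?, h]

theorem TMConfig.ext' {Q Γ : Type} {q q' : Q} {h h' : ℕ} {t t' : ℕ → TSym Γ}
    (h1 : q = q') (h2 : h = h') (h3 : t = t') : (⟨q,h,t⟩ : TMConfig Q Γ) = ⟨q',h',t'⟩ := by
  subst h1; subst h2; subst h3; rfl

noncomputable def ftape (x : List α) (j : ℕ) : ℕ → TSym (Γm α β S) := fun i =>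
  if i = 0 then TSym.lend
  else if i ≤ j then pairSym (x.get? (i-1)) (ReachSet D x (i-1))
  else listTape (x.map Sum.inl) i

def ChkAt (x : List α) (i : ℕ) : Prop := Chk D (decide (x.length < i)) (ReachSet D x i)

theorem conf_succ (x : List α) (m : ℕ) :
    (mach D (α := α) (β := β) (S := S)).conf x (m+1) = (mach D).step ((mach D).conf x m) := by
  unfold DPFTM.conf
  rw [Function.iterate_succ_apply']

theorem ftape_update (x : List α) (j : ℕ) :
    Function.update (ftape D x j) (j+1) (pairSym (x.get? j) (ReachSet D x j))
      = ftape D x (j+1) := by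
  funext i
  rcases eq_or_ne i (j+1) with rfl | hi
  · rw [Function.update_self]
    simp [ftape]
  · rw [Function.update_of_ne hi]
    unfold ftape
    rcases eq_or_ne i 0 with rfl | h0
    · simp
    · by_cases hij : i ≤ j
      · simp [h0, hij, Nat.le_succ_of_le hij]
      · have h2 : ¬ i ≤ j+1 := by omega
        simp [h0, hij, h2]

theorem fwd_conf (x : List α) : ∀ j, (hj : j ≤ x.length + Nn S + 1) →
    (∀ i, x.length ≤ i → i < j → ¬ ChkAt D x i) →
    (mach D (α := α) (β := β)).conf x (j+1) =
      ⟨qFwd (ReachSet D x j) (decide (x.length < j)) ⟨j - x.length, by omega⟩,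
        j + 1, ftape D x j⟩ := by
  intro j
  induction j with
  | zero =>
    intro _ _
    rw [conf_succ]
    have h0 : (mach D (α := α) (β := β)).conf x 0 = (mach D).initConfig x := rfl
    rw [h0, mach_step]
    apply TMConfig.ext'
    · show (machδ D (Sum.inl (R0 (β := β) D, false, 0))
        (listTape (x.map Sum.inl) 0)).1 = _
      have ht : listTape (x.map (Sum.inl : α → Γm α β S)) 0 = TSym.lend := rfl
      rw [ht]
      simp only [machδ]
      simp [qFwd, R0_eq D x, Fin.ext_iff]
    · rfl
    · show Function.update (listTape (x.map Sum.inl)) 0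
        (machδ D (Sum.inl (R0 (β := β) D, false, 0)) (listTape (x.map Sum.inl) 0)).2.1
          = ftape D x 0
      have ht : listTape (x.map (Sum.inl : α → Γm α β S)) 0 = TSym.lend := rfl
      rw [ht]
      simp only [machδ]
      funext i
      rcases eq_or_ne i 0 with rfl | h0
      · simp [ftape]
      · rw [Function.update_of_ne h0]
        simp [ftape, h0]
  | succ j ih =>
    intro hle hchk
    have hle' : j ≤ x.length + Nn S + 1 := by omega
    have hchk' : ∀ i, x.length ≤ i → i < j → ¬ ChkAt D x i :=
      fun i h1 h2 => hchk i h1 (by omega)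
    rw [conf_succ, ih hle' hchk', mach_step]
    simp only
    have hread : ftape D x j (j+1) = listTape (x.map (Sum.inl : α → Γm α β S)) (j+1) := by
      simp [ftape]
    by_cases hjn : j < x.length
    · obtain ⟨a, ha⟩ : ∃ a, x.get? j = some a := by
        rw [List.get?_eq_getElem?]
        exact ⟨x[j], by simp [hjn]⟩
      have hread2 : ftape D x j (j+1) = TSym.sym (Sum.inl a) := by
        rw [hread, listTape_map_inl, ha]
      have hpast : decide (x.length < j) = false := by simp; omega
      have hδ : machδ D (qFwd (ReachSet D x j) (decide (x.length < j))
            (⟨j - x.length, by omega⟩ : Fin (Nn S + 2))) (ftape D x j (j+1)) =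
          (qFwd (Fstep D (some a) (ReachSet D x j)) false
            (⟨j - x.length, by omega⟩ : Fin (Nn S + 2)),
           pairSym (some a) (ReachSet D x j), true) := by
        rw [hread2, hpast]
        show machδ D (Sum.inl _) _ = _
        simp [machδ, qFwd]
      rw [hδ]
      apply TMConfig.ext'
      · rw [← ha, Fstep_ReachSet]
        have h1 : decide (x.length < j + 1) = false := by simp; omega
        rw [h1]
        have h2 : j - x.length = j + 1 - x.length := by omega
        simp [qFwd, Fin.ext_iff, h2]
        rfl
      · rfl
      · rw [← ha]
        exact ftape_update D x j
    · push_neg at hjn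
      have hnone : x.get? j = none := List.get?_eq_none.2 hjn
      have hread2 : ftape D x j (j+1) = TSym.blank := by
        rw [hread, listTape_map_inl, hnone]
      have hnc : ¬ Chk D (decide (x.length < j)) (ReachSet D x j) :=
        hchk j hjn (Nat.lt_succ_self j)
      have hcnt : j - x.length < Nn S + 1 := by omega
      have hδ : machδ D (qFwd (ReachSet D x j) (decide (x.length < j))
            (⟨j - x.length, by omega⟩ : Fin (Nn S + 2))) (ftape D x j (j+1)) =
          (qFwd (Fstep D none (ReachSet D x j)) true
            (⟨j - x.length + 1, by omega⟩ : Fin (Nn S + 2)),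
           pairSym none (ReachSet D x j), true) := by
        rw [hread2]
        show machδ D (Sum.inl _) _ = _
        simp only [machδ]
        rw [dif_neg hnc, dif_pos hcnt]
      rw [hδ]
      apply TMConfig.ext'
      · rw [← hnone, Fstep_ReachSet]
        have h1 : decide (x.length < j + 1) = true := by simp; omega
        rw [h1]
        have h2 : j - x.length + 1 = j + 1 - x.length := by omega
        simp [qFwd, Fin.ext_iff, h2]
        rfl
      · rfl
      · rw [← hnone]
        exact ftape_update D x j

-- ## Semantics of checks

theorem convP_eq_convPad_of (x : List α) (z : List β) {L : ℕ}
    (h : max x.length z.length = L) : convP x z = convPad x z L := by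
  show convPad x z _ = _
  rw [h]

theorem ChkAt_sound (f : List α → Option (List β))
    (hD : ∀ w, w ∈ D.accepts ↔ ∃ x y, f x = some y ∧ w = convP x y)
    {x : List α} {i : ℕ} (hi : x.length ≤ i) (h : ChkAt D x i) :
    ∃ z, f x = some z ∧ max x.length z.length = i := by
  obtain ⟨q, hqR, hacc, hcond⟩ := h
  obtain ⟨z, rfl⟩ := (mem_ReachSet D).1 hqR
  have hmax : max x.length z.length = i := by
    by_cases hni : x.length < i
    · rw [if_pos (by simpa using hni)] at hcond
      have := stat_eq_one hcond
      omega
    · rw [if_neg (by simpa using hni)] at hcond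
      have := stat_ne_zero hcond
      omega
  have hconv : convP x z = convPad x z i := convP_eq_convPad_of x z hmax
  have hw : convP x z ∈ D.accepts := by
    rw [DFA.mem_accepts, hconv]
    exact hacc
  obtain ⟨x₀, y₀, hf₀, heq⟩ := (hD _).1 hw
  obtain ⟨hx, hz⟩ := convP_inj heq
  subst hx; subst hz
  exact ⟨z, hf₀, hmax⟩

theorem ReachSet_blank_iterate (x : List α) (t : ℕ) :
    ReachSet D x (x.length + 1 + t) = (Fstep D none)^[t] (ReachSet D x (x.length + 1)) := by
  induction t with
  | zero => rfl
  | succ t iht =>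
    have hnone : x.get? (x.length + 1 + t) = none := List.get?_eq_none.2 (by omega)
    have := Fstep_ReachSet D x (x.length + 1 + t)
    rw [hnone] at this
    rw [show x.length + 1 + (t + 1) = (x.length + 1 + t) + 1 by omega, ← this, iht,
      Function.iterate_succ_apply']

theorem Chk_of_f (f : List α → Option (List β))
    (hD : ∀ w, w ∈ D.accepts ↔ ∃ x y, f x = some y ∧ w = convP x y)
    {x : List α} {y : List β} (hf : f x = some y) :
    ∃ i, x.length ≤ i ∧ i ≤ x.length + Nn S ∧ ChkAt D x i := by
  have hw : convP x y ∈ D.accepts := (hD _).2 ⟨x, y, hf, rfl⟩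
  rw [DFA.mem_accepts] at hw
  by_cases hyx : y.length ≤ x.length
  · refine ⟨x.length, le_refl _, by omega, ?_⟩
    refine ⟨stPair D x y x.length, (mem_ReachSet D).2 ⟨y, rfl⟩, ?_, ?_⟩
    · show D.eval (convPad x y x.length) ∈ D.accept
      rwa [← convP_eq_convPad_of x y (by omega)]
    · rw [if_neg (by simp)]
      show stat y.length x.length ≠ 0
      intro hc
      have := stat_eq_zero hc
      omega
  · push_neg at hyx
    have hP : ∃ t, (fun R => Chk D true R) ((Fstep D none)^[t] (ReachSet D x (x.length + 1))) := by
      refine ⟨y.length - (x.length + 1), ?_⟩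
      rw [← ReachSet_blank_iterate, show x.length + 1 + (y.length - (x.length + 1)) = y.length
        by omega]
      refine ⟨stPair D x y y.length, (mem_ReachSet D).2 ⟨y, rfl⟩, ?_, ?_⟩
      · show D.eval (convPad x y y.length) ∈ D.accept
        rwa [← convP_eq_convPad_of x y (by omega)]
      · rw [if_pos rfl]
        exact stat_of_eq rfl
    obtain ⟨t, ht, hPt⟩ := iterate_exists_small _ _ _ hP
    refine ⟨x.length + 1 + t, by omega, ?_, ?_⟩
    · show _ ≤ x.length + Nn S
      unfold Nn
      omega
    · unfold ChkAt
      rw [ReachSet_blank_iterate]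
      have : decide (x.length < x.length + 1 + t) = true := decide_eq_true (by omega)
      rw [this]
      exact hPt

-- ## Backward pass

noncomputable def btape (x : List α) (z : List β) (j : ℕ) : ℕ → TSym (Γm α β S) := fun i =>
  if i = 0 then TSym.lend
  else if i ≤ j then pairSym (x.get? (i-1)) (ReachSet D x (i-1))
  else outTSym (z.get? (i-1))

def GoodZ (x : List α) (z : List β) (L : ℕ) : Prop :=
  z.length ≤ L ∧ x.length ≤ L ∧ (z.length = L ∨ L = x.length) ∧
    D.eval (convPad x z L) ∈ D.accept

theorem eval_convPad_ext (x : List α) {w v : List β} {j L : ℕ} (hjL : j ≤ L)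
    (h0 : D.eval (convPad x w j) = D.eval (convPad x v j))
    (hs : ∀ k, j ≤ k → k < L → w.get? k = v.get? k) :
    D.eval (convPad x w L) = D.eval (convPad x v L) := by
  induction L, hjL using Nat.le_induction with
  | base => exact h0
  | succ m hm ihm =>
    rw [convPad_succ, convPad_succ, DFA.eval_append_singleton, DFA.eval_append_singleton,
      ihm (fun k h1 h2 => hs k h1 (by omega)), hs m hm (by omega)]

theorem turn_conf (x : List α) {L : ℕ} (hL1 : x.length ≤ L) (hL2 : L ≤ x.length + Nn S + 1)
    (hchk : ChkAt D x L) (hmin : ∀ i, x.length ≤ i → i < L → ¬ ChkAt D x i) :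
    ∃ q z, (mach D (α := α) (β := β)).conf x (L+2) = ⟨qBwd q, L, btape D x z L⟩ ∧
      q = stPair D x z L ∧ GoodZ D x z L := by
  have hfwd := fwd_conf D x L (by omega) hmin
  rw [conf_succ, hfwd, mach_step]
  simp only
  have hnone : x.get? L = none := List.get?_eq_none.2 hL1
  have hread : ftape D x L (L+1) = TSym.blank := by
    have : ftape D x L (L+1) = listTape (x.map (Sum.inl : α → Γm α β S)) (L+1) := by
      simp [ftape]
    rw [this, listTape_map_inl, hnone]
  have hchk' : Chk D (decide (x.length < L)) (ReachSet D x L) := hchk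
  have hδ : machδ D (qFwd (ReachSet D x L) (decide (x.length < L))
        (⟨L - x.length, by omega⟩ : Fin (Nn S + 2))) (ftape D x L (L+1)) =
      (qBwd (Classical.choose hchk'), TSym.blank, false) := by
    rw [hread]
    show machδ D (Sum.inl _) _ = _
    simp only [machδ]
    rw [dif_pos hchk']
  rw [hδ]
  obtain ⟨hmem, hacc, hcond⟩ := Classical.choose_spec hchk'
  obtain ⟨z, hz⟩ := (mem_ReachSet D).1 hmem
  rw [hz] at hacc hcond
  have hlz : z.length ≤ L := by
    by_cases hni : x.length < L
    · rw [if_pos (by simpa using hni)] at hcond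
      have := stat_eq_one (show stat z.length L = 1 from hcond)
      omega
    · rw [if_neg (by simpa using hni)] at hcond
      exact stat_ne_zero (show stat z.length L ≠ 0 from hcond)
  refine ⟨Classical.choose hchk', z, ?_, hz, ?_, hL1, ?_, ?_⟩
  · apply TMConfig.ext'
    · rfl
    · simp [tmove]
    · funext i
      rcases eq_or_ne i (L+1) with rfl | hi
      · rw [Function.update_self]
        have h1 : z.get? L = none := List.get?_eq_none.2 hlz
        rw [List.get?_eq_getElem?] at h1
        simp [btape, h1, outTSym]
      · rw [Function.update_of_ne hi]
        unfold ftape btape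
        rcases eq_or_ne i 0 with rfl | h0
        · simp
        · by_cases hij : i ≤ L
          · simp [h0, hij]
          · have h2 : x.length + 1 ≤ i := by omega
            have h3 : z.get? (i-1) = none := List.get?_eq_none.2 (by omega)
            obtain ⟨m, rfl⟩ : ∃ m, i = m + 1 := ⟨i - 1, by omega⟩
            have h4 : x.get? m = none := List.get?_eq_none.2 (by omega)
            simp only [h0, hij, if_false, listTape_map_inl, h4, h3, outTSym]
  · exact hlz
  · by_cases hni : x.length < L
    · left
      rw [if_pos (by simpa using hni)] at hcond
      exact stat_eq_one (show stat z.length L = 1 from hcond)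
    · right; omega
  · exact hacc

theorem bwd_conf (x : List α) {L : ℕ} (hL1 : x.length ≤ L) (hL2 : L ≤ x.length + Nn S + 1)
    (hchk : ChkAt D x L) (hmin : ∀ i, x.length ≤ i → i < L → ¬ ChkAt D x i) :
    ∀ k, k ≤ L → ∃ q z,
      (mach D (α := α) (β := β)).conf x (L+2+k) = ⟨qBwd q, L - k, btape D x z (L - k)⟩ ∧
      q = stPair D x z (L - k) ∧ GoodZ D x z L := by
  intro k
  induction k with
  | zero =>
    intro _
    simpa using turn_conf D x hL1 hL2 hchk hmin
  | succ k ihk =>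
    intro hkL
    obtain ⟨q, z, hconf, hq, hgood⟩ := ihk (by omega)
    set j := L - (k+1) with hjdef
    have hjk : L - k = j + 1 := by omega
    have hjL : j < L := by omega
    rw [show L+2+(k+1) = (L+2+k)+1 by omega, conf_succ, hconf, mach_step]
    simp only
    rw [hjk]
    have hread : btape D x z (j+1) (j+1) =
        TSym.sym (Sum.inr (Sum.inr (x.get? j, ReachSet D x j))) := by
      simp [btape, pairSym]
    have hex : ∃ pc : (S × Fin 3) × Option β,
        pc.1 ∈ ReachSet D x j ∧ TTrans D (x.get? j) pc.1 pc.2 q := by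
      refine ⟨(stPair D x z j, z.get? j), (mem_ReachSet D).2 ⟨z, rfl⟩, ?_⟩
      rw [hq, hjk]
      exact trans_stPair D x z j
    have hδ : machδ D (qBwd q) (btape D x z (j+1) (j+1)) =
        (qBwd (Classical.choose hex).1, outTSym (Classical.choose hex).2, false) := by
      rw [hread]
      show machδ D (Sum.inr (Sum.inl q)) _ = _
      simp only [machδ]
      rw [dif_pos hex]
    rw [hδ]
    obtain ⟨hmem, htr⟩ := Classical.choose_spec hex
    set pc := Classical.choose hex with hpc
    obtain ⟨z'', hz''⟩ := (mem_ReachSet D).1 hmem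
    have hst : StatTrans (stat z''.length j) pc.2 (stat z.length (j+1)) := by
      have h2 := htr.2
      rw [hz''] at h2
      have hq2 : q.2 = stat z.length (j+1) := by rw [hq, hjk]; rfl
      rw [hq2] at h2
      exact h2
    obtain ⟨z', h1, h2, h3, h4, h5⟩ := splice z'' z hst
    have hevalj : D.eval (convPad x z' j) = D.eval (convPad x z'' j) :=
      eval_convPad_congr D x j h1
    have hq1' : pc.1 = stPair D x z' j := by
      rw [hz'']
      unfold stPair
      rw [hevalj, h4]
    -- lengths
    have hlen : z'.length = z.length ∨ (z'.length ≤ j ∧ z.length ≤ j) := by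
      by_cases hzj : j < z.length
      · left
        have := h5 z.length hzj
        rw [stat_of_eq rfl] at this
        exact stat_eq_one this
      · right
        push_neg at hzj
        have h6 := h5 (j+1) (by omega)
        rw [stat_of_gt (show z.length < j+1 by omega)] at h6
        have := stat_eq_two h6
        omega
    obtain ⟨hg1, hg2, hg3, hg4⟩ := hgood
    have hl'L : z'.length ≤ L := by rcases hlen with h | ⟨h, _⟩ <;> omega
    have hdisj : z'.length = L ∨ L = x.length := by
      rcases hlen with h | ⟨ha, hb⟩
      · rw [h]; exact hg3
      · rcases hg3 with h | h
        · omega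
        · right; exact h
    have haccept : D.eval (convPad x z' L) ∈ D.accept := by
      have heq : D.eval (convPad x z' L) = D.eval (convPad x z L) := by
        apply eval_convPad_ext D x (show j+1 ≤ L by omega)
        · rw [convPad_succ, convPad_succ, DFA.eval_append_singleton,
            DFA.eval_append_singleton, hevalj, h2]
          have ht1 := htr.1
          rw [hz''] at ht1
          show D.step (stPair D x z'' j).1 (x.get? j, pc.2) = _
          rw [← ht1, hq, hjk]
          show D.eval (convPad x z (j+1)) = _
          rw [convPad_succ, DFA.eval_append_singleton]
        · intro k2 hk2 _
          exact h3 k2 (by omega)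
      rw [heq]
      exact hg4
    refine ⟨pc.1, z', ?_, hq1', hl'L, hg2, hdisj, haccept⟩
    apply TMConfig.ext'
    · rfl
    · simp [tmove]
    · funext i
      rcases eq_or_ne i (j+1) with rfl | hi
      · rw [Function.update_self]
        unfold btape
        rw [if_neg (by omega), if_neg (by omega), Nat.add_sub_cancel, h2]
      · rw [Function.update_of_ne hi]
        unfold btape
        rcases eq_or_ne i 0 with rfl | h0
        · simp
        · by_cases hij : i ≤ j
          · simp [h0, hij, Nat.le_succ_of_le hij]
          · have hgt : ¬ i ≤ j + 1 := by omega
            have h3' : z'.get? (i-1) = z.get? (i-1) := h3 (i-1) (by omega)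
            rw [List.get?_eq_getElem?, List.get?_eq_getElem?] at h3'
            simp [h0, hij, hgt, h3']

-- ## Final acceptance step

theorem mach_accept_eq : (mach D (α := α) (β := β)).accept = qAcc := rfl
theorem mach_reject_eq : (mach D (α := α) (β := β)).reject = qRej := rfl

theorem accept_conf (x : List α) {L : ℕ} (hL1 : x.length ≤ L) (hL2 : L ≤ x.length + Nn S + 1)
    (hchk : ChkAt D x L) (hmin : ∀ i, x.length ≤ i → i < L → ¬ ChkAt D x i) :
    ∃ z, (mach D (α := α) (β := β)).conf x (2*L+3) = ⟨qAcc, 1, btape D x z 0⟩ ∧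
      GoodZ D x z L := by
  obtain ⟨q, z, hconf, hq, hgood⟩ := bwd_conf D x hL1 hL2 hchk hmin L (le_refl L)
  rw [Nat.sub_self] at hconf hq
  rw [show 2*L+3 = (L+2+L)+1 by omega, conf_succ, hconf, mach_step]
  simp only
  have hread : btape D x z 0 0 = TSym.lend := by simp [btape]
  have hcond : q.1 = D.start ∧ q.2 ≠ 2 := by
    constructor
    · rw [hq]
      show D.eval (convPad x z 0) = D.start
      rw [show convPad x z 0 = [] by simp [convPad]]
      rfl
    · rw [hq]
      show stat z.length 0 ≠ 2
      intro hc
      have := stat_eq_two hc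
      omega
  have hδ : machδ D (qBwd q) TSym.lend = (qAcc, TSym.lend, true) := by
    show machδ D (Sum.inr (Sum.inl q)) TSym.lend = _
    simp only [machδ]
    rw [if_pos hcond]
  rw [hread, hδ]
  refine ⟨z, ?_, hgood⟩
  apply TMConfig.ext'
  · rfl
  · rfl
  · funext i
    rcases eq_or_ne i 0 with rfl | h0
    · rw [Function.update_self]
      simp [btape]
    · rw [Function.update_of_ne h0]

-- ## Absorption and non-halting

theorem state_absorb (b : Bool) (t : TSym (Γm α β S)) :
    machδ D (Sum.inr (Sum.inr b)) t = (Sum.inr (Sum.inr b), t, true) := by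
  cases t <;> rfl

theorem absorb_conf (x : List α) (m₀ : ℕ) (b : Bool)
    (h : ((mach D (α := α) (β := β)).conf x m₀).state = Sum.inr (Sum.inr b)) :
    ∀ m, m₀ ≤ m → ((mach D).conf x m).state = Sum.inr (Sum.inr b) := by
  intro m hm
  induction m, hm using Nat.le_induction with
  | base => exact h
  | succ m hm ih =>
    rw [conf_succ, mach_step]
    show (machδ D ((mach D).conf x m).state _).1 = _
    rw [ih, state_absorb]

theorem reject_conf (x : List α)
    (hno : ∀ i, x.length ≤ i → i ≤ x.length + Nn S + 1 → ¬ ChkAt D x i) :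
    ((mach D (α := α) (β := β)).conf x (x.length + Nn S + 3)).state = qRej ∧
    ∀ m, ((mach D).conf x m).state ≠ qAcc := by
  have hfwd := fwd_conf D x (x.length + Nn S + 1) (le_refl _)
    (fun i h1 h2 => hno i h1 (by omega))
  have hstep : ((mach D (α := α) (β := β)).conf x (x.length + Nn S + 3)).state = qRej := by
    rw [show x.length + Nn S + 3 = (x.length + Nn S + 1 + 1) + 1 by omega, conf_succ,
      hfwd, mach_step]
    simp only
    set j := x.length + Nn S + 1 with hj
    have hread : ftape D x j (j+1) = TSym.blank := by
      have h1 : ftape D x j (j+1) = listTape (x.map (Sum.inl : α → Γm α β S)) (j+1) := by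
        simp [ftape]
      rw [h1, listTape_map_inl, List.get?_eq_none.2 (by omega)]
    rw [hread]
    show (machδ D (Sum.inl (ReachSet D x j, _, _)) TSym.blank).1 = _
    simp only [machδ]
    rw [dif_neg (show ¬ Chk D (decide (x.length < x.length + Nn S + 1)) (ReachSet D x j) from
      hno j (by omega) (by omega)), dif_neg (show ¬ (x.length + Nn S + 1 - x.length < Nn S + 1) by omega)]
  refine ⟨hstep, fun m => ?_⟩
  rcases Nat.lt_or_ge m (x.length + Nn S + 3) with hm | hm
  · rcases Nat.eq_zero_or_pos m with rfl | hpos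
    · show ((mach D).initConfig x).state ≠ qAcc
      simp [DPFTM.initConfig, mach, qFwd, qAcc]
    · obtain ⟨j, rfl⟩ : ∃ j, m = j + 1 := ⟨m - 1, by omega⟩
      rw [fwd_conf D x j (by omega) (fun i h1 h2 => hno i h1 (by omega))]
      simp [qFwd, qAcc]
      intro h; cases h
  · rw [absorb_conf D x _ false hstep m hm]
    intro hcon
    exact Bool.noConfusion (Sum.inr_injective (Sum.inr_injective hcon))

theorem tsw_unique {Γ' : Type} {t : ℕ → TSym Γ'} {u v : List Γ'}
    (hu : TapeStartsWith t u) (hv : TapeStartsWith t v) : u = v := by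
  obtain ⟨hu0, hu1, hu2⟩ := hu
  obtain ⟨hv0, hv1, hv2⟩ := hv
  have hlen : u.length = v.length := by
    by_contra hne
    rcases Nat.lt_or_ge u.length v.length with h | h
    · have h1 := hv1 ⟨u.length, h⟩
      rw [hu2] at h1
      exact absurd h1 (by simp)
    · have h' : v.length < u.length := by omega
      have h1 := hu1 ⟨v.length, h'⟩
      rw [hv2] at h1
      exact absurd h1 (by simp)
  apply List.ext_getElem hlen
  intro i h1 h2
  have e1 := hu1 ⟨i, h1⟩
  have e2 := hv1 ⟨i, h2⟩
  have e3 : TSym.sym (u.get ⟨i, h1⟩) = TSym.sym (v.get ⟨i, h2⟩) := e1.symm.trans e2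
  injection e3

-- ## Putting the run together

theorem tsw_btape (x : List α) (z : List β) :
    TapeStartsWith (btape D x z 0)
      (z.map (fun b => (Sum.inr (Sum.inl b) : Γm α β S))) := by
  refine ⟨by simp [btape], ?_, ?_⟩
  · intro i
    have hilt : i.1 < z.length := by
      have := i.2
      simpa using this
    have hget : z.get? i.1 = some (z.get ⟨i.1, hilt⟩) := by
      rw [List.get?_eq_getElem?]
      simp [hilt]
    show btape D x z 0 (i.1+1) = _
    unfold btape
    rw [if_neg (by omega), if_neg (by omega), Nat.add_sub_cancel, hget]
    show TSym.sym _ = _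
    congr 1
    simp [List.get_eq_getElem]
  · show btape D x z 0 ((z.map _).length + 1) = TSym.blank
    unfold btape
    rw [if_neg (by omega), if_neg (by omega), Nat.add_sub_cancel, List.length_map,
      List.get?_eq_none.2 (le_refl _)]
    rfl

theorem not_halted_conf (x : List α) {m : ℕ} {L : ℕ} (hL2 : L ≤ x.length + Nn S + 1)
    (hmin : ∀ i, x.length ≤ i → i < L → ¬ ChkAt D x i)
    (hL1 : x.length ≤ L) (hchk : ChkAt D x L)
    (hm : m < 2*L+3) : ¬ (mach D (α := α) (β := β)).Halted ((mach D).conf x m) := by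
  intro hH
  rcases Nat.eq_zero_or_pos m with rfl | hpos
  · rcases hH with h | h <;> cases h
  · rcases Nat.lt_or_ge m (L+2) with hm2 | hm2
    · obtain ⟨j, rfl⟩ : ∃ j, m = j + 1 := ⟨m - 1, by omega⟩
      have hconf := fwd_conf D x j (by omega) (fun i h1 h2 => hmin i h1 (by omega))
      rcases hH with h | h <;> rw [hconf] at h <;> cases h
    · obtain ⟨k, rfl⟩ : ∃ k, m = L + 2 + k := ⟨m - (L+2), by omega⟩
      obtain ⟨q, z1, hconf, _, _⟩ := bwd_conf D x hL1 hL2 hchk hmin k (by omega)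
      rcases hH with h | h <;> rw [hconf] at h <;>
        cases h

theorem run_accept (f : List α → Option (List β))
    (hD : ∀ w, w ∈ D.accepts ↔ ∃ x y, f x = some y ∧ w = convP x y)
    {x : List α} {y : List β} (hf : f x = some y) :
    ∃ L, x.length ≤ L ∧ L ≤ x.length + Nn S ∧
      (mach D (α := α) (β := β)).HaltsAcceptAt x (2*L+3) ∧
      TapeStartsWith ((mach D).conf x (2*L+3)).tape
        (y.map (fun b => (Sum.inr (Sum.inl b) : Γm α β S))) := by
  obtain ⟨i₀, hi₀1, hi₀2, hi₀3⟩ := Chk_of_f D f hD hf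
  have hex : ∃ i, x.length ≤ i ∧ ChkAt D x i := ⟨i₀, hi₀1, hi₀3⟩
  set L := Nat.find hex with hLdef
  obtain ⟨hL1, hchk⟩ := Nat.find_spec hex
  have hL2 : L ≤ x.length + Nn S := le_trans (Nat.find_le ⟨hi₀1, hi₀3⟩) hi₀2
  have hmin : ∀ i, x.length ≤ i → i < L → ¬ ChkAt D x i :=
    fun i h1 h2 hc => Nat.find_min hex h2 ⟨h1, hc⟩
  obtain ⟨z, hconf, hg1, hg2, hg3, hg4⟩ := accept_conf D x hL1 (by omega) hchk hmin
  have hmax : max x.length z.length = L := by omega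
  have hfz : f x = some z := by
    have hw : convP x z ∈ D.accepts := by
      rw [DFA.mem_accepts, convP_eq_convPad_of x z hmax]
      exact hg4
    obtain ⟨x₀, y₀, hf₀, heq⟩ := (hD _).1 hw
    obtain ⟨hx, hz⟩ := convP_inj heq
    subst hx; subst hz
    exact hf₀
  have hyz : y = z := by
    rw [hf] at hfz
    exact Option.some.inj hfz
  subst hyz
  refine ⟨L, hL1, hL2, ⟨?_, ?_⟩, ?_⟩
  · rw [hconf]
    rfl
  · intro m hm
    exact not_halted_conf D x (le_trans hL2 (by omega)) hmin hL1 hchk hm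
  · rw [hconf]
    exact tsw_btape D x y

theorem haltsAcceptAt_unique {Γ' : Type} {M : DPFTM α β Γ'} {x : List α} {n1 n2 : ℕ}
    (h1 : M.HaltsAcceptAt x n1) (h2 : M.HaltsAcceptAt x n2) : n1 = n2 := by
  by_contra hne
  rcases Nat.lt_or_ge n1 n2 with h | h
  · exact h2.2 n1 h (Or.inl h1.1)
  · exact h1.2 n2 (by omega) (Or.inl h2.1)

theorem master (f : List α → Option (List β))
    (hD : ∀ w, w ∈ D.accepts ↔ ∃ x y, f x = some y ∧ w = convP x y) :
    (mach D (α := α) (β := β)).Computes f ∧ (mach D).LinearTime ∧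
      ∃ c : ℕ, ∀ x y, f x = some y →
        ∃ n ≤ 2 * (x.length + c + 2), (mach D).HaltsAcceptAt x n := by
  refine ⟨?_, ?_, ?_⟩
  · intro x y
    constructor
    · intro hf
      obtain ⟨L, _, _, hH, hT⟩ := run_accept D f hD hf
      exact ⟨2*L+3, hH, hT⟩
    · rintro ⟨n', hH, hT⟩
      rcases hfx : f x with _ | y₀
      · exfalso
        have hno : ∀ i, x.length ≤ i → i ≤ x.length + Nn S + 1 → ¬ ChkAt D x i := by
          intro i hi _ hc
          obtain ⟨z, hz, _⟩ := ChkAt_sound D f hD hi hc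
          rw [hfx] at hz
          cases hz
        exact (reject_conf D x hno).2 n' hH.1
      · obtain ⟨L, _, _, hH', hT'⟩ := run_accept D f hD hfx
        have hn' : n' = 2*L+3 := haltsAcceptAt_unique hH hH'
        subst hn'
        have hmapeq := tsw_unique hT hT'
        have hy : y = y₀ := List.map_injective_iff.2 (mach D).outputInj hmapeq
        rw [hy]
  · refine ⟨2 * Nn S + 5, ?_⟩
    intro x
    by_cases hex : ∃ i, x.length ≤ i ∧ i ≤ x.length + Nn S + 1 ∧ ChkAt D x i
    · set L := Nat.find hex with hLdef
      obtain ⟨hL1, hL2, hchk⟩ := Nat.find_spec hex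
      have hmin : ∀ i, x.length ≤ i → i < L → ¬ ChkAt D x i :=
        fun i h1 h2 hc => Nat.find_min hex h2 ⟨h1, by omega, hc⟩
      obtain ⟨z, hconf, _⟩ := accept_conf D x hL1 hL2 hchk hmin
      refine ⟨2*L+3, ?_, Or.inl (by rw [hconf]; rfl)⟩
      calc 2*L+3 ≤ 2*Nn S + 5*x.length + 5 := by omega
        _ ≤ 2*Nn S*x.length + (2*Nn S + 5*x.length + 5) := Nat.le_add_left _ _
        _ = (2*Nn S+5)*(x.length+1) := by ring
    · push_neg at hex
      refine ⟨x.length + Nn S + 3, ?_, Or.inr (reject_conf D x hex).1⟩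
      calc x.length + Nn S + 3 ≤ 2*Nn S + 5*x.length + 5 := by omega
        _ ≤ 2*Nn S*x.length + (2*Nn S + 5*x.length + 5) := Nat.le_add_left _ _
        _ = (2*Nn S+5)*(x.length+1) := by ring
  · refine ⟨Nn S, ?_⟩
    intro x y hf
    obtain ⟨L, hL1, hL2, hH, _⟩ := run_accept D f hD hf
    exact ⟨2*L+3, by omega, hH⟩

end RS

/-- For every automatic function `f` there is a deterministic
position-faithful one-tape Turing machine which computes `f` in linear time; indeed
there is a constant `c` such that the machine halts on each input `x` in the domain of
`f` within `2·(|x|+c+2)` steps. -/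
theorem stmt0 {α β : Type} [Fintype α] [Fintype β] (f : List α → Option (List β))
    (hf : IsAutomatic f) :
    ∃ (Γ : Type) (M : DPFTM α β Γ), M.Computes f ∧ M.LinearTime ∧
      ∃ c : ℕ, ∀ x y, f x = some y →
        ∃ n ≤ 2 * (x.length + c + 2), M.HaltsAcceptAt x n := by
  obtain ⟨S, finS, D, hD⟩ := hf
  haveI := finS
  obtain ⟨h1, h2, h3⟩ := master D f (fun w => hD w)
  exact ⟨Γm α β S, mach D, h1, h2, h3⟩
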